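/- Let (μ_k)_{k≥1} be a strictly increasing sequence of positive real numbers with ∑_{k=1}^{∞} 1/μ_k = +∞ and let c₃ > 1. For m ∈ ℕ let m₁(m) denote the least integer N ≥ m such that ∑_{k=m}^{N} 1/μ_k > c₃/μ_m. Define m₀ := 1, m_1 := m₁(1), and recursively m_{ν+1} := m₁(m_ν + 1) for ν ≥ 1. Then for every ν ≥ 1 one has ∑_{k=1}^{m_{ν+1}} 1/μ_k < (c₃ + 1) · ∑_{k=0}^{ν} 1/μ_{m_k}. -/

import Mathlib

open Filter Topology

theorem partial_sum_bound_via_blocks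
    (μ : ℕ → ℝ) (hpos : ∀ k, 0 < μ k) (hmono : StrictMono μ)
    (hdiv : Filter.Tendsto (fun N => ∑ k ∈ Finset.Icc 1 N, (μ k)⁻¹)
      Filter.atTop Filter.atTop)
    (c₃ : ℝ) (hc₃ : 1 < c₃)
    (M1 : ℕ → ℕ)
    (hM1 : ∀ m : ℕ, 1 ≤ m →
      m ≤ M1 m ∧ c₃ / μ m < ∑ k ∈ Finset.Icc m (M1 m), (μ k)⁻¹ ∧
      ∀ N : ℕ, m ≤ N → N < M1 m → ∑ k ∈ Finset.Icc m N, (μ k)⁻¹ ≤ c₃ / μ m)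
    (ms : ℕ → ℕ) (hms0 : ms 0 = 1) (hms1 : ms 1 = M1 1)
    (hmsrec : ∀ ν : ℕ, 1 ≤ ν → ms (ν + 1) = M1 (ms ν + 1)) :
    ∀ ν : ℕ, 1 ≤ ν →
      ∑ k ∈ Finset.Icc 1 (ms (ν + 1)), (μ k)⁻¹ <
        (c₃ + 1) * ∑ k ∈ Finset.range (ν + 1), (μ (ms k))⁻¹ := by
  -- key block estimate
  have key : ∀ m, 1 ≤ m →
      ∑ k ∈ Finset.Icc m (M1 m), (μ k)⁻¹ ≤ c₃ / μ m + (μ (M1 m))⁻¹ := by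
    intro m hm
    obtain ⟨h1, h2, h3⟩ := hM1 m hm
    rcases eq_or_lt_of_le h1 with he | hl
    · rw [← he, Finset.Icc_self, Finset.sum_singleton]
      have h4 : 0 < c₃ / μ m := div_pos (by linarith) (hpos m)
      linarith
    · obtain ⟨b, hb⟩ : ∃ b, M1 m = b + 1 := ⟨M1 m - 1, by omega⟩
      rw [hb, Finset.sum_Icc_succ_top (by omega)]
      have := h3 b (by omega) (by omega)
      linarith
  have hge : ∀ ν, 1 ≤ ms ν := by
    intro ν
    induction ν with
    | zero => omega
    | succ n ih =>
      rcases Nat.eq_zero_or_pos n with rfl | hn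
      · rw [hms1]; exact le_trans le_rfl (hM1 1 le_rfl).1
      · rw [hmsrec n hn]
        have := (hM1 (ms n + 1) (by omega)).1
        omega
  have hlt : ∀ ν, 1 ≤ ν → ms ν < ms (ν + 1) := by
    intro ν hν
    rw [hmsrec ν hν]
    exact lt_of_lt_of_le (Nat.lt_succ_self _) (hM1 (ms ν + 1) (by omega)).1
  -- the generic induction step piece
  have step : ∀ ν, 1 ≤ ν →
      ∑ k ∈ Finset.Ioc (ms ν) (ms (ν + 1)), (μ k)⁻¹ <
        (c₃ + 1) * (μ (ms ν))⁻¹ := by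
    intro ν hν
    have hrec := hmsrec ν hν
    have hkey := key (ms ν + 1) (by omega)
    rw [← Finset.Icc_add_one_left_eq_Ioc, hrec]
    have hmono1 : μ (ms ν) < μ (ms ν + 1) := hmono (Nat.lt_succ_self _)
    have hdivlt : c₃ / μ (ms ν + 1) < c₃ / μ (ms ν) :=
      div_lt_div_of_pos_left (by linarith) (hpos _) hmono1
    have hms2 : ms ν < M1 (ms ν + 1) := by
      have := (hM1 (ms ν + 1) (by omega)).1; omega
    have hinvlt : (μ (M1 (ms ν + 1)))⁻¹ < (μ (ms ν))⁻¹ :=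
      inv_strictAnti₀ (hpos _) (hmono hms2)
    have : c₃ / μ (ms ν) = c₃ * (μ (ms ν))⁻¹ := div_eq_mul_inv _ _
    nlinarith
  intro ν hν
  induction ν, hν using Nat.le_induction with
  | base =>
    -- ν = 1
    have hsplit : ∑ k ∈ Finset.Ioc 0 (ms 1), (μ k)⁻¹ +
        ∑ k ∈ Finset.Ioc (ms 1) (ms 2), (μ k)⁻¹ =
        ∑ k ∈ Finset.Ioc 0 (ms 2), (μ k)⁻¹ :=
      Finset.sum_Ioc_consecutive _ (by omega) (le_of_lt (hlt 1 le_rfl))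
    have hIcc : ∀ N, Finset.Icc 1 N = Finset.Ioc 0 N := by
      intro N; rw [← Finset.Icc_add_one_left_eq_Ioc, zero_add]
    have h1 : ∑ k ∈ Finset.Ioc 0 (ms 1), (μ k)⁻¹ ≤ c₃ / μ 1 + (μ (ms 1))⁻¹ := by
      rw [← hIcc, hms1]; exact key 1 le_rfl
    have h2 := step 1 le_rfl
    have hrs : ∑ k ∈ Finset.range 2, (μ (ms k))⁻¹ = (μ 1)⁻¹ + (μ (ms 1))⁻¹ := by
      simp [Finset.sum_range_succ, hms0]
    rw [hIcc, ← hsplit, hrs]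
    have hd : c₃ / μ 1 = c₃ * (μ 1)⁻¹ := div_eq_mul_inv _ _
    have : (μ (ms 1))⁻¹ ≤ (μ 1)⁻¹ := by
      rcases eq_or_lt_of_le (hge 1) with he | hl
      · rw [← he]
      · exact le_of_lt (inv_strictAnti₀ (hpos _) (hmono hl))
    nlinarith
  | succ ν hν ih =>
    have hIcc : ∀ N, Finset.Icc 1 N = Finset.Ioc 0 N := by
      intro N; rw [← Finset.Icc_add_one_left_eq_Ioc, zero_add]
    have hsplit : ∑ k ∈ Finset.Ioc 0 (ms (ν + 1)), (μ k)⁻¹ +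
        ∑ k ∈ Finset.Ioc (ms (ν + 1)) (ms (ν + 2)), (μ k)⁻¹ =
        ∑ k ∈ Finset.Ioc 0 (ms (ν + 2)), (μ k)⁻¹ :=
      Finset.sum_Ioc_consecutive _ (by omega) (le_of_lt (hlt (ν + 1) (by omega)))
    have h2 := step (ν + 1) (by omega)
    rw [hIcc] at ih ⊢
    rw [← hsplit, Finset.sum_range_succ, mul_add]
    linarith
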